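/- The relation 'u dominates v' on vertices reachable from the source s in a directed graph forms a partial order, and for each fixed reachable vertex v, the set of dominators of v is totally ordered by the dominance relation. -/

import Mathlib

/-!
Dominators in a directed graph `g : V → V → Prop` with a source vertex `s`.
-/

open Finset

noncomputable section
open scoped Classical

variable {V : Type*}

/-- `w` is reachable from `s` in the directed graph `g`. -/
def Reach (g : V → V → Prop) (s w : V) : Prop :=
  Relation.ReflTransGen g s w

/-- `w` is reachable from `s` in `g` by a path avoiding the vertex `u`. -/
def ReachAvoid (g : V → V → Prop) (u s w : V) : Prop :=
  Relation.ReflTransGen (fun a b => g a b ∧ a ≠ u ∧ b ≠ u) s w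

/-- `u` dominates `v` (w.r.t. source `s`): `v` is reachable from `s` and every
path from `s` to `v` passes through `u`. -/
def Dominates (g : V → V → Prop) (s u v : V) : Prop :=
  Reach g s v ∧ (u = v ∨ ¬ ReachAvoid g u s v)

/-- `u` is the immediate dominator of `v`: `u` is a dominator of `v` other than
`v`, and every other dominator of `v` dominates `u`. -/
def IsIdom (g : V → V → Prop) (s u v : V) : Prop :=
  Dominates g s u v ∧ u ≠ v ∧ ∀ w, Dominates g s w v → w ≠ v → Dominates g s w u

/-- `v` lies in the subtree rooted at `u` of the dominator tree of `g` with
source `s` (i.e. `u` is an ancestor of `v`, or `v` itself, along immediate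
dominator edges). -/
def InDomSubtree (g : V → V → Prop) (s u v : V) : Prop :=
  Relation.ReflTransGen (fun a b => IsIdom g s a b) u v

/-- on the vertices reachable from the source `s`, the dominance
relation is a partial order (reflexive, antisymmetric, transitive), and for
each fixed reachable vertex `v` the set of dominators of `v` is totally
ordered by dominance. -/
lemma firstOcc {r : V → V → Prop} {s x : V} (h : Relation.ReflTransGen r s x) (P : V → Prop) :
    Relation.ReflTransGen (fun a b => r a b ∧ ¬ P a) s x ∨
      ∃ m, P m ∧ Relation.ReflTransGen (fun a b => r a b ∧ ¬ P a) s m ∧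
        Relation.ReflTransGen r m x := by
  induction h using Relation.ReflTransGen.head_induction_on with
  | refl => exact Or.inl .refl
  | head hac hcb ih =>
    rename_i a c
    by_cases hP : P a
    · exact Or.inr ⟨a, hP, .refl, Relation.ReflTransGen.head hac hcb⟩
    · rcases ih with p | ⟨m, hm, p1, p2⟩
      · exact Or.inl (Relation.ReflTransGen.head ⟨hac, hP⟩ p)
      · exact Or.inr ⟨m, hm, Relation.ReflTransGen.head ⟨hac, hP⟩ p1, p2⟩

lemma lastOcc {r : V → V → Prop} {s x : V} (h : Relation.ReflTransGen r s x) (P : V → Prop) :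
    Relation.ReflTransGen (fun a b => r a b ∧ ¬ P b) s x ∨
      ∃ m, P m ∧ Relation.ReflTransGen r s m ∧
        Relation.ReflTransGen (fun a b => r a b ∧ ¬ P b) m x := by
  induction h with
  | refl => exact Or.inl .refl
  | @tail b c hsb hbc ih =>
    by_cases hP : P c
    · exact Or.inr ⟨c, hP, hsb.tail hbc, .refl⟩
    · rcases ih with p | ⟨m, hm, p1, p2⟩
      · exact Or.inl (p.tail ⟨hbc, hP⟩)
      · exact Or.inr ⟨m, hm, p1, p2.tail ⟨hbc, hP⟩⟩

lemma sourcesFull {r : V → V → Prop} {P Q : V → Prop} {s x : V}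
    (h : Relation.ReflTransGen (fun a b => r a b ∧ ¬ P a) s x)
    (hPQ : ∀ a, ¬ P a → ¬ Q a) :
    ¬ Q x → Relation.ReflTransGen (fun a b => r a b ∧ ¬ Q a ∧ ¬ Q b) s x := by
  induction h with
  | refl => exact fun _ => .refl
  | @tail b c hsb hbc ih => exact fun hx => (ih (hPQ _ hbc.2)).tail ⟨hbc.1, hPQ _ hbc.2, hx⟩

lemma targetsFull {r : V → V → Prop} {P Q : V → Prop} {s x : V}
    (h : Relation.ReflTransGen (fun a b => r a b ∧ ¬ P b) s x)
    (hPQ : ∀ a, ¬ P a → ¬ Q a) :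
    ¬ Q s → Relation.ReflTransGen (fun a b => r a b ∧ ¬ Q a ∧ ¬ Q b) s x := by
  induction h using Relation.ReflTransGen.head_induction_on with
  | refl => exact fun _ => .refl
  | head hac hcb ih =>
    exact fun hs => Relation.ReflTransGen.head ⟨hac.1, hs, hPQ _ hac.2⟩ (ih (hPQ _ hac.2))

lemma reach_of_dom {g : V → V → Prop} {s u v : V} (hv : Reach g s v)
    (h : ¬ ReachAvoid g u s v) : Reach g s u := by
  rcases lastOcc hv (· = u) with p | ⟨m, hm, hsm, -⟩
  · by_cases hsu : s = u
    · exact hsu ▸ Relation.ReflTransGen.refl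
    · exact absurd (targetsFull p (fun a ha => ha) hsu) h
  · exact hm ▸ hsm

theorem dominance_partialOrder_and_total_on_dominators (g : V → V → Prop)
    (s : V) :
    (∀ u : V, Reach g s u → Dominates g s u u) ∧
    (∀ u v : V, Dominates g s u v → Dominates g s v u → u = v) ∧
    (∀ u v w : V, Dominates g s u v → Dominates g s v w → Dominates g s u w) ∧
    (∀ v : V, Reach g s v → ∀ u w : V, Dominates g s u v → Dominates g s w v →
      (Dominates g s u w ∨ Dominates g s w u)) := by
  refine ⟨fun u hu => ⟨hu, Or.inl rfl⟩, ?_, ?_, ?_⟩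
  · -- antisymmetry
    intro u v hu hv
    by_contra hne
    have huv : ¬ ReachAvoid g u s v := hu.2.resolve_left hne
    have hvu : ¬ ReachAvoid g v s u := hv.2.resolve_left (fun h => hne h.symm)
    rcases firstOcc hu.1 (fun a => a = u ∨ a = v) with p | ⟨m, hm, p1, -⟩
    · exact huv (sourcesFull p (fun a ha h' => ha (Or.inl h'))
        (fun h' => hne h'.symm))
    · rcases hm with rfl | rfl
      · exact hvu (sourcesFull p1 (fun a ha h' => ha (Or.inr h')) hne)
      · exact huv (sourcesFull p1 (fun a ha h' => ha (Or.inl h'))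
          (fun h' => hne h'.symm))
  · -- transitivity
    intro u v w huv hvw
    by_cases h1 : u = v
    · exact h1 ▸ hvw
    by_cases h2 : v = w
    · exact h2 ▸ huv
    have hnuv : ¬ ReachAvoid g u s v := huv.2.resolve_left h1
    have hnvw : ¬ ReachAvoid g v s w := hvw.2.resolve_left h2
    refine ⟨hvw.1, Or.inr fun hra => ?_⟩
    rcases firstOcc hra (· = v) with p | ⟨m, hm, p1, -⟩
    · exact hnvw (Relation.ReflTransGen.mono
        (fun a b h => ⟨h.1.1, h.2⟩) _ _ (sourcesFull p (fun a ha => ha) (fun h' => h2 h'.symm)))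
    · exact hnuv (hm ▸ (Relation.ReflTransGen.mono (fun a b h => h.1) _ _ p1))
  · -- totality on dominators
    intro v hv u w hu hw
    have hRw : Reach g s w := by
      rcases hw.2 with rfl | h
      · exact hv
      · exact reach_of_dom hv h
    have hRu : Reach g s u := by
      rcases hu.2 with rfl | h
      · exact hv
      · exact reach_of_dom hv h
    by_cases huw : u = w
    · exact Or.inl ⟨hRw, Or.inl huw⟩
    by_cases huv : u = v
    · exact Or.inr ⟨hRu, huv ▸ hw.2⟩
    by_cases hwv : w = v
    · exact Or.inl ⟨hRw, hwv ▸ hu.2⟩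
    have hnu : ¬ ReachAvoid g u s v := hu.2.resolve_left huv
    have hnw : ¬ ReachAvoid g w s v := hw.2.resolve_left hwv
    by_cases hd1 : Dominates g s u w
    · exact Or.inl hd1
    by_cases hd2 : Dominates g s w u
    · exact Or.inr hd2
    exfalso
    -- extract avoiding paths
    have p : ReachAvoid g u s w := by
      by_contra hp
      exact hd1 ⟨hRw, Or.inr (by simpa using hp)⟩
    have q : ReachAvoid g w s u := by
      by_contra hq
      exact hd2 ⟨hRu, Or.inr (by simpa using hq)⟩
    -- every path from u to v hits w, and symmetrically
    have hnwuv : ¬ ReachAvoid g w u v := fun p' => hnw (q.trans p')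
    have hnuwv : ¬ ReachAvoid g u w v := fun p' => hnu (p.trans p')
    have hsw : s ≠ w := by
      rintro rfl
      rcases q.cases_head with h | ⟨c, hc, -⟩
      · exact huw h.symm
      · exact hc.2.1 rfl
    rcases lastOcc hv (· = w) with pv | ⟨m, hm, -, suf⟩
    · exact hnw (targetsFull pv (fun a ha => ha) hsw)
    · subst hm
      rcases firstOcc suf (· = u) with p2 | ⟨m', hm', -, suf2⟩
      · exact hnuwv (Relation.ReflTransGen.mono (fun a b h => ⟨h.1.1, h.2⟩) _ _ (sourcesFull p2 (fun a ha => ha)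
          (fun h' => huv h'.symm)))
      · subst hm'
        exact hnwuv (targetsFull suf2 (fun a ha => ha) huw)
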